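/- For every K > 2 there exists a K-AND-OR-BN F on n = K + 1 nodes such that for every observation set S, if F is observable with S then S is the whole set of K + 1 nodes (i.e., in the worst case all n nodes must be observed). -/
import Mathlib


/-- `F` is observable with observation set `S` if the map from an initial state to its
output sequence (the restriction of each iterate to `S`) is injective. -/
def observable {n : ℕ} (F : (Fin n → Bool) → (Fin n → Bool)) (S : Finset (Fin n)) : Prop :=
  Function.Injective (fun (x : Fin n → Bool) => fun (t : ℕ) (i : S) => (F^[t] x) i.val)

/-- `F` is a `K`-AND-OR-BN: each local function is the AND or the OR of `K` literals
on pairwise distinct variables (a literal is `x_{i_j} XOR b_j`). -/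
def isAndOrBN {n : ℕ} (K : ℕ) (F : (Fin n → Bool) → (Fin n → Bool)) : Prop :=
  ∀ i : Fin n, ∃ idx : Fin K → Fin n, Function.Injective idx ∧ ∃ b : Fin K → Bool,
    (∀ x, F x i = Finset.univ.inf (fun j => Bool.xor (x (idx j)) (b j))) ∨
    (∀ x, F x i = Finset.univ.sup (fun j => Bool.xor (x (idx j)) (b j)))

theorem worst_case_K_and_or (K : ℕ) (hK : 2 < K) :
    ∃ F : (Fin (K + 1) → Bool) → (Fin (K + 1) → Bool),
      isAndOrBN K F ∧
      (∀ S : Finset (Fin (K + 1)), observable F S → S = Finset.univ) := by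
  classical
  have hK0 : 0 < K := by omega
  have hK1 : 1 < K := by omega
  set F : (Fin (K + 1) → Bool) → (Fin (K + 1) → Bool) :=
    fun x i => Finset.univ.inf (fun j : Fin K => x (i.succAbove j)) with hF
  refine ⟨F, ?_, ?_⟩
  · intro i
    exact ⟨i.succAbove, Fin.succAbove_right_injective, fun _ => false,
      Or.inl (fun x => by simp [hF, Bool.xor_false])⟩
  · intro S hS
    by_contra hne
    obtain ⟨i, hi⟩ : ∃ i, i ∉ S := by
      by_contra h; push_neg at h; exact hne (Finset.eq_univ_iff_forall.mpr h)
    set x0 : Fin (K + 1) → Bool := fun _ => false with hx0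
    set y0 : Fin (K + 1) → Bool := Function.update x0 i true with hy0
    have hFx : F x0 = fun _ => false := by
      funext j
      have h1 : F x0 j ≤ false := by
        simpa [hF, hx0] using
          Finset.inf_le (f := fun j' : Fin K => x0 (j.succAbove j'))
            (Finset.mem_univ (⟨0, hK0⟩ : Fin K))
      exact le_antisymm h1 (Bool.false_le _)
    have hFy : F y0 = fun _ => false := by
      funext j
      obtain ⟨k, hk⟩ : ∃ k : Fin K, j.succAbove k ≠ i := by
        by_contra h
        push_neg at h
        have h01 : (⟨0, hK0⟩ : Fin K) = ⟨1, hK1⟩ :=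
          Fin.succAbove_right_injective ((h ⟨0, hK0⟩).trans (h ⟨1, hK1⟩).symm)
        simp at h01
      have hy : y0 (j.succAbove k) = false := by
        simp [hy0, Function.update_of_ne hk, hx0]
      have h1 : F y0 j ≤ false := by
        calc F y0 j ≤ y0 (j.succAbove k) :=
              Finset.inf_le (f := fun j' : Fin K => y0 (j.succAbove j')) (Finset.mem_univ k)
          _ = false := hy
      exact le_antisymm h1 (Bool.false_le _)
    have hxy : F x0 = F y0 := hFx.trans hFy.symm
    have heq : x0 = y0 := by
      apply hS
      funext t s
      cases t with
      | zero =>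
        have hsi : (s : Fin (K + 1)) ≠ i := fun h => hi (h ▸ s.2)
        simp [hy0, Function.update_of_ne hsi]
      | succ n =>
        simp only [Function.iterate_succ_apply, hxy]
    have : x0 i = y0 i := congrFun heq i
    simp [hx0, hy0] at this
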